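/- Assume additionally (Monotonicity) W1 ≥ W0 P-almost surely and (Relevance) E[W | Z = 1] ≠ E[W | Z = 0]. Then P(C) > 0, and for every y ∈ ℝ the D-IV-LATE is identified by the Wald-type ratio: P(Y1 ≤ y | C) − P(Y0 ≤ y | C) = (E[1{Y ≤ y} | Z = 1] − E[1{Y ≤ y} | Z = 0]) / (E[W | Z = 1] − E[W | Z = 0]), where P(· | C) := P(· ∩ C)/P(C). -/

import Mathlib

open MeasureTheory ProbabilityTheory Set

/-- Conditional mean given an event: `E[U | A] := E[U · 1_A] / P(A)`. -/
noncomputable def condMean {Ω : Type*} [MeasurableSpace Ω] (P : Measure Ω)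
    (U : Ω → ℝ) (A : Set Ω) : ℝ :=
  (∫ ω in A, U ω ∂P) / (P A).toReal

open scoped Classical in
private lemma condMean_eq_prob {Ω : Type*} [MeasurableSpace Ω] (P : Measure Ω)
    [IsProbabilityMeasure P] (U : Ω → ℝ) (B A : Set Ω)
    (hB : MeasurableSet B) (hA : MeasurableSet A) (hPA : P A ≠ 0)
    (hU : ∀ ω ∈ A, U ω = if ω ∈ B then 1 else 0)
    (hInd : P (A ∩ B) = P A * P B) :
    condMean P U A = (P B).toReal := by
  have h1 : ∫ ω in A, U ω ∂P = (P (A ∩ B)).toReal := by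
    rw [setIntegral_congr_fun hA (g := fun ω => B.indicator (fun _ => (1:ℝ)) ω)
      (fun ω hω => by simp [hU ω hω, Set.indicator_apply])]
    rw [← integral_indicator hA, Set.indicator_indicator]
    exact integral_indicator_one (hA.inter hB)
  have hAne : (P A).toReal ≠ 0 := by
    simp [ENNReal.toReal_eq_zero_iff, hPA, measure_ne_top P A]
  rw [condMean, h1, hInd, ENNReal.toReal_mul, mul_comm, mul_div_assoc,
    div_self hAne, mul_one]

theorem d_iv_late_wald_identification
    {Ω : Type*} [MeasurableSpace Ω] (P : Measure Ω) [IsProbabilityMeasure P]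
    (Z W0 W1 Y0 Y1 : Ω → ℝ)
    (hZ : Measurable Z) (hW0 : Measurable W0) (hW1 : Measurable W1)
    (hY0 : Measurable Y0) (hY1 : Measurable Y1)
    (hZbin : ∀ ω, Z ω = 0 ∨ Z ω = 1)
    (hW0bin : ∀ ω, W0 ω = 0 ∨ W0 ω = 1)
    (hW1bin : ∀ ω, W1 ω = 0 ∨ W1 ω = 1)
    (W Y : Ω → ℝ)
    (hWdef : ∀ ω, W ω = Z ω * W1 ω + (1 - Z ω) * W0 ω)
    (hYdef : ∀ ω, Y ω = W ω * Y1 ω + (1 - W ω) * Y0 ω)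
    (hindep : IndepFun Z (fun ω => (Y0 ω, Y1 ω, W0 ω, W1 ω)) P)
    (hoverlap : 0 < P {ω | Z ω = 1} ∧ P {ω | Z ω = 1} < 1)
    (hmono : ∀ᵐ ω ∂P, W0 ω ≤ W1 ω)
    (hrel : condMean P W {ω | Z ω = 1} ≠ condMean P W {ω | Z ω = 0}) :
    0 < P {ω | W0 ω < W1 ω} ∧
    ∀ y : ℝ,
      (P ({ω | Y1 ω ≤ y} ∩ {ω | W0 ω < W1 ω})).toReal / (P {ω | W0 ω < W1 ω}).toReal
        - (P ({ω | Y0 ω ≤ y} ∩ {ω | W0 ω < W1 ω})).toReal / (P {ω | W0 ω < W1 ω}).toReal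
      = (condMean P (fun ω => if Y ω ≤ y then (1 : ℝ) else 0) {ω | Z ω = 1}
          - condMean P (fun ω => if Y ω ≤ y then (1 : ℝ) else 0) {ω | Z ω = 0})
        / (condMean P W {ω | Z ω = 1} - condMean P W {ω | Z ω = 0}) := by
  classical
  set V : Ω → ℝ × ℝ × ℝ × ℝ := fun ω => (Y0 ω, Y1 ω, W0 ω, W1 ω) with hVdef
  have hV : Measurable V := (hY0.prodMk (hY1.prodMk (hW0.prodMk hW1)))
  set A1 : Set Ω := {ω | Z ω = 1} with hA1def
  set A0 : Set Ω := {ω | Z ω = 0} with hA0def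
  have hA1m : MeasurableSet A1 := hZ (measurableSet_singleton 1)
  have hA0m : MeasurableSet A0 := hZ (measurableSet_singleton 0)
  have hA1pre : A1 = Z ⁻¹' {1} := rfl
  have hA0pre : A0 = Z ⁻¹' {0} := rfl
  have hA0c : A0 = A1ᶜ := by
    ext ω; rcases hZbin ω with h | h <;> simp [hA1def, hA0def, h]
  have hPA1 : P A1 ≠ 0 := hoverlap.1.ne'
  have hPA0 : P A0 ≠ 0 := by
    rw [hA0c, measure_compl hA1m (measure_ne_top P A1)]
    simp only [measure_univ]
    intro h
    exact absurd (tsub_eq_zero_iff_le.mp h) (not_le.mpr hoverlap.2)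
  -- independence of V-preimages with Z-events
  have key : ∀ (S : Set (ℝ × ℝ × ℝ × ℝ)), MeasurableSet S → ∀ z : ℝ,
      P (Z ⁻¹' {z} ∩ V ⁻¹' S) = P (Z ⁻¹' {z}) * P (V ⁻¹' S) := fun S hS z =>
    hindep.measure_inter_preimage_eq_mul {z} S (measurableSet_singleton z) hS
  -- complier set
  set C : Set Ω := {ω | W0 ω < W1 ω} with hCdef
  have hCm : MeasurableSet C := measurableSet_lt hW0 hW1
  -- W1 and W0 as indicators
  set B1 : Set Ω := {ω | W1 ω = 1} with hB1def
  set B0 : Set Ω := {ω | W0 ω = 1} with hB0def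
  have hB1m : MeasurableSet B1 := hW1 (measurableSet_singleton 1)
  have hB0m : MeasurableSet B0 := hW0 (measurableSet_singleton 1)
  have hB1pre : B1 = V ⁻¹' {p | p.2.2.2 = 1} := rfl
  have hB0pre : B0 = V ⁻¹' {p | p.2.2.1 = 1} := rfl
  -- condMean of W given Z = 1 / Z = 0
  have cW1 : condMean P W A1 = (P B1).toReal := by
    refine condMean_eq_prob P W B1 A1 hB1m hA1m hPA1 (fun ω hω => ?_) ?_
    · have hz : Z ω = 1 := hω
      rcases hW1bin ω with h | h <;> simp [hWdef ω, hz, hB1def, h]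
    · rw [hA1pre, hB1pre]
      exact key _ (measurable_snd.comp (measurable_snd.comp measurable_snd)
        (measurableSet_singleton 1)) 1
  have cW0 : condMean P W A0 = (P B0).toReal := by
    refine condMean_eq_prob P W B0 A0 hB0m hA0m hPA0 (fun ω hω => ?_) ?_
    · have hz : Z ω = 0 := hω
      rcases hW0bin ω with h | h <;> simp [hWdef ω, hz, hB0def, h]
    · rw [hA0pre, hB0pre]
      exact key _ (measurable_fst.comp (measurable_snd.comp measurable_snd)
        (measurableSet_singleton 1)) 0
  -- P B1 = P B0 + P C
  have hsplit : P B1 = P B0 + P C := by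
    have haeq : B1 =ᵐ[P] (B0 ∪ C : Set Ω) := by
      rw [Filter.eventuallyEq_set]
      filter_upwards [hmono] with ω hω
      constructor
      · intro h1
        rcases hW0bin ω with h0 | h0
        · right; simp only [hCdef, Set.mem_setOf_eq]; rw [h0, h1]; norm_num
        · left; exact h0
      · rintro (h0 | hc)
        · rcases hW1bin ω with h1 | h1
          · exfalso; rw [h0, h1] at hω; norm_num at hω
          · exact h1
        · rcases hW1bin ω with h1 | h1
          · exfalso
            rcases hW0bin ω with h0 | h0 <;>
              · simp only [hCdef, Set.mem_setOf_eq, h0, h1] at hc; norm_num at hc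
          · exact h1
    have hdisj : Disjoint B0 C := by
      rw [Set.disjoint_left]
      intro ω h0 hc
      rcases hW1bin ω with h1 | h1 <;>
        · simp only [hCdef, Set.mem_setOf_eq, hB0def] at h0 hc
          rw [h0, h1] at hc; norm_num at hc
    rw [measure_congr haeq, measure_union hdisj hCm]
  have hden : condMean P W A1 - condMean P W A0 = (P C).toReal := by
    rw [cW1, cW0, hsplit, ENNReal.toReal_add (measure_ne_top P B0) (measure_ne_top P C)]
    ring
  have hPC : 0 < P C := by
    rcases (zero_le : (0 : ENNReal) ≤ P C).lt_or_eq with h | h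
    · exact h
    · exfalso; apply hrel; rw [← sub_eq_zero, hden, ← h]; simp
  have hPCr : (P C).toReal ≠ 0 := by
    simp [ENNReal.toReal_eq_zero_iff, hPC.ne', measure_ne_top P C]
  refine ⟨hPC, fun y => ?_⟩
  -- outcome events
  set E1 : Set Ω := {ω | W1 ω * Y1 ω + (1 - W1 ω) * Y0 ω ≤ y} with hE1def
  set E0 : Set Ω := {ω | W0 ω * Y1 ω + (1 - W0 ω) * Y0 ω ≤ y} with hE0def
  have hE1m : MeasurableSet E1 :=
    measurableSet_le (by fun_prop) measurable_const
  have hE0m : MeasurableSet E0 :=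
    measurableSet_le (by fun_prop) measurable_const
  have cY1 : condMean P (fun ω => if Y ω ≤ y then (1 : ℝ) else 0) A1 = (P E1).toReal := by
    refine condMean_eq_prob P _ E1 A1 hE1m hA1m hPA1 (fun ω hω => ?_) ?_
    · have hz : Z ω = 1 := hω
      have hw : W ω = W1 ω := by rw [hWdef ω, hz]; ring
      have hy : Y ω = W1 ω * Y1 ω + (1 - W1 ω) * Y0 ω := by rw [hYdef ω, hw]
      simp only [hE1def, Set.mem_setOf_eq, hy]
    · have : E1 = V ⁻¹' {p | p.2.2.2 * p.2.1 + (1 - p.2.2.2) * p.1 ≤ y} := rfl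
      rw [hA1pre, this]
      exact key _ (measurableSet_le (by fun_prop) measurable_const) 1
  have cY0 : condMean P (fun ω => if Y ω ≤ y then (1 : ℝ) else 0) A0 = (P E0).toReal := by
    refine condMean_eq_prob P _ E0 A0 hE0m hA0m hPA0 (fun ω hω => ?_) ?_
    · have hz : Z ω = 0 := hω
      have hw : W ω = W0 ω := by rw [hWdef ω, hz]; ring
      have hy : Y ω = W0 ω * Y1 ω + (1 - W0 ω) * Y0 ω := by rw [hYdef ω, hw]
      simp only [hE0def, Set.mem_setOf_eq, hy]
    · have : E0 = V ⁻¹' {p | p.2.2.1 * p.2.1 + (1 - p.2.2.1) * p.1 ≤ y} := rfl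
      rw [hA0pre, this]
      exact key _ (measurableSet_le (by fun_prop) measurable_const) 0
  -- decompose E1, E0 over C
  have hE1C : E1 ∩ C = {ω | Y1 ω ≤ y} ∩ C := by
    ext ω
    simp only [Set.mem_inter_iff, hE1def, hCdef, Set.mem_setOf_eq]
    constructor
    · rintro ⟨h, hc⟩
      refine ⟨?_, hc⟩
      rcases hW1bin ω with h1 | h1
      · exfalso
        rcases hW0bin ω with h0 | h0 <;> (rw [h0, h1] at hc; norm_num at hc)
      · rw [h1] at h; linarith
    · rintro ⟨h, hc⟩
      refine ⟨?_, hc⟩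
      rcases hW1bin ω with h1 | h1
      · exfalso
        rcases hW0bin ω with h0 | h0 <;> (rw [h0, h1] at hc; norm_num at hc)
      · rw [h1]; linarith
  have hE0C : E0 ∩ C = {ω | Y0 ω ≤ y} ∩ C := by
    ext ω
    simp only [Set.mem_inter_iff, hE0def, hCdef, Set.mem_setOf_eq]
    constructor
    · rintro ⟨h, hc⟩
      refine ⟨?_, hc⟩
      rcases hW0bin ω with h0 | h0
      · rw [h0] at h; linarith
      · exfalso
        rcases hW1bin ω with h1 | h1 <;> (rw [h0, h1] at hc; norm_num at hc)
    · rintro ⟨h, hc⟩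
      refine ⟨?_, hc⟩
      rcases hW0bin ω with h0 | h0
      · rw [h0]; linarith
      · exfalso
        rcases hW1bin ω with h1 | h1 <;> (rw [h0, h1] at hc; norm_num at hc)
  have hEoff : P (E1 \ C) = P (E0 \ C) := by
    apply measure_congr
    rw [Filter.eventuallyEq_set]
    filter_upwards [hmono] with ω hω
    by_cases hc : ω ∈ C
    · simp [hc]
    · have heq : W0 ω = W1 ω := le_antisymm hω (not_lt.mp hc)
      simp only [Set.mem_diff, hE1def, hE0def, Set.mem_setOf_eq, heq]
  have hE1s : P E1 = P ({ω | Y1 ω ≤ y} ∩ C) + P (E1 \ C) := by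
    rw [← hE1C, measure_inter_add_diff E1 hCm]
  have hE0s : P E0 = P ({ω | Y0 ω ≤ y} ∩ C) + P (E0 \ C) := by
    rw [← hE0C, measure_inter_add_diff E0 hCm]
  have hnum : (P E1).toReal - (P E0).toReal
      = (P ({ω | Y1 ω ≤ y} ∩ C)).toReal - (P ({ω | Y0 ω ≤ y} ∩ C)).toReal := by
    rw [hE1s, hE0s, hEoff,
      ENNReal.toReal_add (measure_ne_top P _) (measure_ne_top P _),
      ENNReal.toReal_add (measure_ne_top P _) (measure_ne_top P _)]
    ring
  rw [cY1, cY0, hden, hnum, div_sub_div_same]
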